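/- arXiv:1311.5007 — 6 statements merged into one kernel-verified Lean document; each statement's English description precedes it below -/
import Mathlib

section
/- Let (c_n) be the sequence of polynomials in ℚ[β] defined by c_0 = 2, c_1 = 1, and (n+1)·c_{n+1} = c_n + (β/4)·(n-1)·c_{n-1} for n ≥ 1. If β is specialized to 4, then for all n ≥ 1 one has c_{2n+1} = c_{2n} = (2n)!/(2^{2n}(n!)^2). -/
theorem stmt_1 (c : ℕ → ℚ) (h0 : c 0 = 2) (h1 : c 1 = 1)
    (hrec : ∀ n : ℕ, 1 ≤ n → ((n : ℚ) + 1) * c (n + 1) = c n + ((n : ℚ) - 1) * c (n - 1)) :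
    ∀ n : ℕ, 1 ≤ n →
      c (2 * n + 1) = ((2 * n).factorial : ℚ) / (2 ^ (2 * n) * ((n.factorial : ℚ)) ^ 2) ∧
      c (2 * n) = ((2 * n).factorial : ℚ) / (2 ^ (2 * n) * ((n.factorial : ℚ)) ^ 2) := by
  intro n hn
  induction n with
  | zero => omega
  | succ m ih =>
    rcases Nat.eq_zero_or_pos m with hm | hm
    · subst hm
      have r1 := hrec 1 (by norm_num)
      have r2 := hrec 2 (by norm_num)
      simp only [Nat.cast_one, Nat.cast_ofNat] at r1 r2
      norm_num at r1 r2
      rw [h1] at r1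
      have hc2 : c 2 = 1/2 := by linarith
      rw [hc2, h1] at r2
      have hc3 : c 3 = 1/2 := by linarith
      norm_num [Nat.factorial]
      exact ⟨hc3, hc2⟩
    · obtain ⟨hodd, heven⟩ := ih hm
      have r1 := hrec (2 * m + 1) (by omega)
      have r2 := hrec (2 * m + 2) (by omega)
      have e1 : 2 * m + 1 - 1 = 2 * m := by omega
      have e2 : 2 * m + 2 - 1 = 2 * m + 1 := by omega
      rw [e1] at r1
      rw [e2] at r2
      push_cast at r1 r2
      rw [hodd, heven] at r1
      have hfm : ((m.factorial : ℚ)) ≠ 0 := by positivity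
      have hm1 : ((m:ℚ)+1) ≠ 0 := by positivity
      have h2 : ((2*m:ℚ)+2) ≠ 0 := by positivity
      have hfm1 : ((m+1 : ℕ).factorial : ℚ) = ((m:ℚ)+1) * (m.factorial : ℚ) := by
        rw [Nat.factorial_succ]; push_cast; ring
      have hf2m1 : ((2*(m+1) : ℕ).factorial : ℚ)
          = ((2*m:ℚ)+2) * ((2*m:ℚ)+1) * ((2*m).factorial : ℚ) := by
        have h : 2*(m+1) = (2*m+1) + 1 := by omega
        rw [h, Nat.factorial_succ, Nat.factorial_succ]; push_cast; ring
      set F := ((2*m).factorial : ℚ) / (2 ^ (2*m) * ((m.factorial : ℚ))^2) with hFdef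
      set G := ((2*(m+1)).factorial : ℚ) / (2 ^ (2*(m+1)) * (((m+1).factorial : ℚ))^2) with hGdef
      have hGF : ((2*m:ℚ)+2) * G = ((2*m:ℚ)+1) * F := by
        rw [hFdef, hGdef, hf2m1, hfm1]
        have hpe : 2*(m+1) = 2*m + 2 := by omega
        rw [hpe]
        field_simp
        ring
      have hc2 : c (2*m+2) = G := by
        have : ((2*m:ℚ)+2) * c (2*m+2) = ((2*m:ℚ)+2) * G := by
          rw [hGF]; linear_combination r1
        exact mul_left_cancel₀ h2 this
      have hc3 : c (2*m+3) = G := by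
        have h3 : ((2*m:ℚ)+3) ≠ 0 := by positivity
        have : ((2*m:ℚ)+3) * c (2*m+3) = ((2*m:ℚ)+3) * G := by
          rw [hc2, hodd] at r2
          linear_combination r2 - hGF
        exact mul_left_cancel₀ h3 this
      constructor
      · rw [show 2*(m+1)+1 = 2*m+3 from by ring]; exact hc3
      · rw [show 2*(m+1) = 2*m+2 from by ring]; exact hc2
end

section
/- Let (c_n) be the sequence in ℚ[β] defined by c_0 = 2, c_1 = 1, and (n+1)c_{n+1} = c_n + (β/4)(n-1)c_{n-1} for n ≥ 1. Then for every n ≥ 1, the degree of c_n as a polynomial in β is at most ⌊(n-1)/2⌋. -/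
open Polynomial

theorem stmt_2 (c : ℕ → Polynomial ℚ) (h0 : c 0 = C 2) (h1 : c 1 = 1)
    (hrec : ∀ n : ℕ, 1 ≤ n →
      C ((n : ℚ) + 1) * c (n + 1) = c n + C (((n : ℚ) - 1) / 4) * X * c (n - 1)) :
    ∀ n : ℕ, 1 ≤ n → (c n).degree ≤ (((n - 1) / 2 : ℕ) : WithBot ℕ) := by
  intro n
  induction n using Nat.strong_induction_on with
  | _ n ih =>
    match n with
    | 0 => intro h; omega
    | 1 => intro _; simp [h1]
    | 2 =>
      intro _
      have h := hrec 1 le_rfl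
      norm_num at h
      have hd : (c 2).degree = (C (2:ℚ) * c 2).degree := by
        rw [degree_C_mul (by norm_num : (2:ℚ) ≠ 0)]
      rw [show (2-1)/2 = 0 by norm_num]
      rw [hd, h, h1]
      simp
    | (m+3) =>
      intro _
      have h := hrec (m+2) (by omega)
      have hc1 : ((m+2 : ℕ) : ℚ) + 1 ≠ 0 := by push_cast; positivity
      have hd : (c (m+3)).degree = (C (((m+2:ℕ):ℚ) + 1) * c (m+2+1)).degree := by
        rw [degree_C_mul hc1]
      have ih1 := ih (m+2) (by omega) (by omega)
      have ih2 := ih (m+1) (by omega) (by omega)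
      rw [hd, h]
      refine le_trans (degree_add_le _ _) (max_le ?_ ?_)
      · refine le_trans ih1 ?_
        exact_mod_cast (by omega : (m+2-1)/2 ≤ (m+3-1)/2)
      · refine le_trans (degree_mul_le _ _) ?_
        have : (m+2-1 : ℕ) = m+1 := by omega
        rw [this] at *
        refine le_trans (add_le_add (degree_mul_le _ _) ih2) ?_
        refine le_trans (add_le_add_left (add_le_add degree_C_le degree_X_le) _) ?_
        rw [zero_add]
        have : ((1:ℕ):WithBot ℕ) + (((m+1-1)/2 : ℕ) : WithBot ℕ) = (((1 + (m+1-1)/2 : ℕ)) : WithBot ℕ) := by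
          push_cast; ring
        rw [show (1 : WithBot ℕ) = ((1:ℕ) : WithBot ℕ) from rfl, this]
        exact_mod_cast (by omega : 1+(m+1-1)/2 ≤ (m+3-1)/2)
end

section
/- Fix an integer i ≥ 1 and set β = 1/i². Let (c_n) be defined by c_0 = 2, c_1 = 1, and (n+1)c_{n+1} = c_n + (β/4)(n-1)c_{n-1} for n ≥ 1. Then there exist rational numbers a_0, …, a_{i-1} such that for all n ≥ 1, c_n = (1/(2i)^n)·(a_0 + a_1 n + ⋯ + a_{i-1} n^{i-1}). -/
open Polynomial Finset

noncomputable def myq (i j : ℕ) : ℚ[X] :=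
  (X + 1) ^ (j + 1) - (X - 1) ^ (j + 1) - C (2 * (i : ℚ)) * X ^ j

lemma myq_coeff_zero (i j k : ℕ) (hj : j < i) (hk : i - 1 ≤ k) :
    (myq i j).coeff k = 0 := by
  have hjk : j ≤ k := by omega
  unfold myq
  rw [coeff_sub, coeff_sub, coeff_X_add_one_pow]
  have hx1 : ((X - 1 : ℚ[X]) ^ (j+1)).coeff k = (-1)^(j+1-k) * ((j+1).choose k) := by
    rw [sub_eq_add_neg, ← C_1, ← C_neg, coeff_X_add_C_pow]
  rw [hx1, coeff_C_mul, coeff_X_pow]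
  rcases Nat.lt_or_ge k (j+1) with h | h
  · have hkj : k = j := by omega
    have hji : j = i - 1 := by omega
    subst hkj
    simp [Nat.choose_succ_self_right, pow_succ, Nat.sub_self]
    have : (k : ℚ) = (i : ℚ) - 1 := by
      have h2 : ((k + 1 : ℕ) : ℚ) = i := by exact_mod_cast congrArg (Nat.cast : ℕ → ℚ) (by omega : k + 1 = i)
      push_cast at h2; linarith
    rw [this]; ring
  · rcases Nat.eq_or_lt_of_le h with h' | h'
    · rw [← h']
      simp [Nat.sub_self, if_neg (by omega : ¬ j = k)]
    · rw [Nat.choose_eq_zero_of_lt h']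
      simp [if_neg (by omega : ¬ j = k)]
      omega

noncomputable def myT (i : ℕ) : (Fin i → ℚ) →ₗ[ℚ] (Fin (i-1) → ℚ) where
  toFun a := fun k => ∑ j : Fin i, a j * (myq i j).coeff k
  map_add' a b := by funext k; simp [add_mul, Finset.sum_add_distrib]
  map_smul' r a := by funext k; simp [Finset.mul_sum, mul_assoc]

lemma exists_kernel (i : ℕ) (hi : 1 ≤ i) :
    ∃ a : Fin i → ℚ, a ≠ 0 ∧ (∑ j : Fin i, C (a j) * myq i j) = 0 := by
  have hni : ¬ Function.Injective (myT i) := by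
    intro hinj
    have := LinearMap.finrank_le_finrank_of_injective hinj
    simp [Module.finrank_fin_fun] at this
    omega
  rw [Function.not_injective_iff] at hni
  obtain ⟨x, y, hxy, hne⟩ := hni
  refine ⟨x - y, sub_ne_zero.mpr hne, ?_⟩
  have hT : myT i (x - y) = 0 := by rw [map_sub, hxy, sub_self]
  ext k
  rw [finset_sum_coeff]
  simp only [coeff_C_mul, coeff_zero]
  rcases Nat.lt_or_ge k (i-1) with hk | hk
  · have := congrFun hT ⟨k, hk⟩
    simpa [myT, Pi.sub_apply, sub_mul] using this
  · exact Finset.sum_eq_zero fun j _ => by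
      rw [myq_coeff_zero i j k j.isLt hk, mul_zero]

lemma exists_poly (i : ℕ) (hi : 1 ≤ i) :
    ∃ P : ℚ[X], P ≠ 0 ∧ P.natDegree < i ∧
      ∀ x : ℚ, (x + 1) * P.eval (x + 1) = 2 * i * P.eval x + (x - 1) * P.eval (x - 1) := by
  obtain ⟨a, ha, hker⟩ := exists_kernel i hi
  set P : ℚ[X] := ∑ j : Fin i, C (a j) * X ^ (j : ℕ) with hP
  have hcoeff : ∀ j : Fin i, P.coeff j = a j := by
    intro j
    rw [hP, finset_sum_coeff]
    rw [Finset.sum_eq_single j]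
    · simp
    · intro b _ hbj
      simp only [coeff_C_mul, coeff_X_pow]
      rw [if_neg (fun h => hbj (Fin.ext (by exact_mod_cast h.symm))), mul_zero]
    · simp
  have hPne : P ≠ 0 := by
    intro h
    apply ha
    funext j
    have := hcoeff j
    rw [h] at this
    simpa using this.symm
  have hdeg : P.natDegree < i := by
    have : P.natDegree ≤ i - 1 := by
      apply natDegree_sum_le_of_forall_le
      intro j _
      refine le_trans (natDegree_C_mul_le _ _) ?_
      simp [natDegree_X_pow]
      omega
    omega
  have hidentity : (X + 1) * P.comp (X + 1) - (X - 1) * P.comp (X - 1) - C (2 * (i:ℚ)) * P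
      = ∑ j : Fin i, C (a j) * myq i j := by
    rw [hP]
    rw [Polynomial.sum_comp, Polynomial.sum_comp]
    rw [Finset.mul_sum, Finset.mul_sum, Finset.mul_sum, ← Finset.sum_sub_distrib,
      ← Finset.sum_sub_distrib]
    apply Finset.sum_congr rfl
    intro j _
    rw [mul_comp, C_comp, X_pow_comp, mul_comp, C_comp, X_pow_comp]
    unfold myq
    ring
  rw [hker] at hidentity
  refine ⟨P, hPne, hdeg, fun x => ?_⟩
  have := congrArg (Polynomial.eval x) hidentity
  simp only [eval_sub, eval_mul, eval_add, eval_comp, eval_C, eval_X, eval_one, eval_zero] at this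
  linarith

lemma eval_one_ne (i : ℕ) (P : ℚ[X]) (hPne : P ≠ 0)
    (hid : ∀ x : ℚ, (x + 1) * P.eval (x + 1) = 2 * i * P.eval x + (x - 1) * P.eval (x - 1)) :
    P.eval 1 ≠ 0 := by
  intro h1
  have key : ∀ n : ℕ, 1 ≤ n → P.eval (n : ℚ) = 0 ∧ P.eval ((n : ℚ) + 1) = 0 := by
    intro n hn
    induction n, hn using Nat.le_induction with
    | base =>
      refine ⟨by simpa using h1, ?_⟩
      have := hid 1
      norm_num [h1] at this
      convert this using 2
      norm_num
    | succ n hn ih =>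
      refine ⟨by push_cast; exact ih.2, ?_⟩
      have := hid ((n : ℚ) + 1)
      rw [ih.2] at this
      have h0 : P.eval ((n:ℚ) + 1 - 1) = 0 := by simpa using ih.1
      rw [h0] at this
      have hz : ((n:ℚ) + 1 + 1) * P.eval ((n:ℚ) + 1 + 1) = 0 := by linarith
      have hne : ((n:ℚ) + 1 + 1) ≠ 0 := by positivity
      push_cast
      exact (mul_eq_zero.mp hz).resolve_left hne
  apply hPne
  apply P.eq_zero_of_infinite_isRoot
  apply Set.infinite_of_injective_forall_mem (f := fun n : ℕ => ((n : ℚ) + 1))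
  case hi =>
    intro a b hab
    simpa using hab
  case hf =>
    intro n
    have := (key (n+1) (by omega)).1
    simp only [Set.mem_setOf_eq, IsRoot.def]
    push_cast at this ⊢
    convert this using 2

theorem stmt_3 (i : ℕ) (hi : 1 ≤ i) (c : ℕ → ℚ) (h0 : c 0 = 2) (h1 : c 1 = 1)
    (hrec : ∀ n : ℕ, 1 ≤ n →
      ((n : ℚ) + 1) * c (n + 1) = c n + (1 / (4 * (i : ℚ) ^ 2)) * ((n : ℚ) - 1) * c (n - 1)) :
    ∃ a : Fin i → ℚ, ∀ n : ℕ, 1 ≤ n →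
      c n = (1 / (2 * (i : ℚ)) ^ n) * ∑ j : Fin i, a j * (n : ℚ) ^ (j : ℕ) := by
  obtain ⟨P, hPne, hdeg, hid⟩ := exists_poly i hi
  have h1ne : P.eval 1 ≠ 0 := eval_one_ne i P hPne hid
  have hiQ : (i : ℚ) ≠ 0 := by
    simp only [ne_eq, Nat.cast_eq_zero]; omega
  have htne : (2 * (i : ℚ)) ≠ 0 := by positivity
  set R : ℚ[X] := C (2 * (i:ℚ) / P.eval 1) * P with hR
  have hR1 : R.eval 1 = 2 * (i : ℚ) := by
    rw [hR, eval_mul, eval_C, div_mul_cancel₀ _ h1ne]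
  have hRid : ∀ x : ℚ, (x + 1) * R.eval (x + 1)
      = 2 * i * R.eval x + (x - 1) * R.eval (x - 1) := by
    intro x
    simp only [hR, eval_mul, eval_C]
    linear_combination (2 * (i:ℚ) / P.eval 1) * hid x
  have hdegR : R.natDegree < i := lt_of_le_of_lt (natDegree_C_mul_le _ _) hdeg
  have ht2 : (1 / (4 * (i:ℚ)^2)) * (2 * (i:ℚ))^2 = 1 := by
    field_simp
    ring
  have key : ∀ n : ℕ, 1 ≤ n →
      c n * (2 * (i:ℚ))^n = R.eval (n : ℚ) ∧
      c (n+1) * (2 * (i:ℚ))^(n+1) = R.eval ((n:ℚ) + 1) := by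
    intro n hn
    induction n, hn using Nat.le_induction with
    | base =>
      constructor
      · rw [h1, Nat.cast_one, hR1, pow_one, one_mul]
      · have hrec1 := hrec 1 le_rfl
        norm_num [h1, h0] at hrec1
        have hRid1 := hRid 1
        norm_num [hR1] at hRid1
        norm_num
        linear_combination 2 * (i:ℚ)^2 * hrec1 - (1/2) * hRid1
    | succ n hn ih =>
      have ih2' : c (n+1) * (2 * (i:ℚ))^(n+1) = R.eval ((n:ℚ)+1) := ih.2
      refine ⟨by push_cast; exact ih2', ?_⟩
      have hrecn := hrec (n+1) (by omega)
      rw [Nat.add_sub_cancel] at hrecn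
      push_cast at hrecn
      have hRn := hRid ((n:ℚ) + 1)
      rw [show ((n:ℚ) + 1 - 1) = (n:ℚ) by ring] at hRn
      have hn2 : ((n:ℚ) + 1 + 1) ≠ 0 := by positivity
      have hmain : ((n:ℚ)+1+1) * (c (n+1+1) * (2 * (i:ℚ))^(n+1+1))
          = ((n:ℚ)+1+1) * R.eval ((n:ℚ)+1+1) := by
        rw [hRn]
        linear_combination (2 * (i:ℚ))^(n+1+1) * hrecn
          + ((n:ℚ) * c n * (2*(i:ℚ))^n) * ht2 + (n:ℚ) * ih.1 + (2*(i:ℚ)) * ih2'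
      have hfin := mul_left_cancel₀ hn2 hmain
      push_cast
      convert hfin using 2
  refine ⟨fun j => R.coeff j, ?_⟩
  intro n hn
  have hsum : (∑ j : Fin i, R.coeff (j:ℕ) * (n:ℚ)^(j:ℕ)) = R.eval (n:ℚ) := by
    rw [eval_eq_sum_range' hdegR]
    exact Fin.sum_univ_eq_sum_range (fun j => R.coeff j * (n:ℚ)^j) i
  rw [hsum]
  have h := (key n hn).1
  have hpowne : (2*(i:ℚ))^n ≠ 0 := pow_ne_zero _ htne
  field_simp
  linarith [h]
end

section
/- In a commutative ring, suppose elements h, α, β satisfy h² = αh − (α² − β)/4 (with 2 invertible). Then for every integer r ≥ 1, h^r = (1/2^r)·( Σ_{i even, 0 ≤ i ≤ r} α^{r-i} β^{i/2} C(r,i) + (2h − α)·Σ_{i odd, 1 ≤ i ≤ r} α^{r-i} β^{(i-1)/2} C(r,i) ). -/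
theorem stmt_4 (A : Type*) [CommRing A] [Algebra ℚ A] (h α β : A)
    (hrel : 4 * h ^ 2 = 4 * (α * h) - α ^ 2 + β) :
    ∀ r : ℕ, 1 ≤ r →
      h ^ r = ((1 : ℚ) / 2 ^ r) •
        ((∑ i ∈ (Finset.range (r + 1)).filter (fun i => Even i),
            (r.choose i : A) * α ^ (r - i) * β ^ (i / 2)) +
         (2 * h - α) *
          ∑ i ∈ (Finset.range (r + 1)).filter (fun i => Odd i),
            (r.choose i : A) * α ^ (r - i) * β ^ ((i - 1) / 2)) := by
  intro r _
  set x := 2 * h - α with hxdef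
  have hx : x ^ 2 = β := by
    rw [hxdef]; linear_combination hrel
  have key : (α + x) ^ r =
      (∑ i ∈ (Finset.range (r + 1)).filter (fun i => Even i),
        (r.choose i : A) * α ^ (r - i) * β ^ (i / 2)) +
      x * ∑ i ∈ (Finset.range (r + 1)).filter (fun i => Odd i),
        (r.choose i : A) * α ^ (r - i) * β ^ ((i - 1) / 2) := by
    rw [add_comm α x, add_pow,
      ← Finset.sum_filter_add_sum_filter_not (Finset.range (r + 1)) (fun i => Even i)]
    congr 1
    · apply Finset.sum_congr rfl
      intro i hi
      obtain ⟨k, hk⟩ := (Finset.mem_filter.mp hi).2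
      subst hk
      have h1 : (k + k) / 2 = k := by omega
      have h2 : x ^ (k + k) = β ^ k := by
        rw [← hx, ← pow_mul]; ring_nf
      rw [h1, h2]; ring
    · rw [Finset.mul_sum]
      have hfe : (Finset.range (r + 1)).filter (fun i => ¬ Even i)
          = (Finset.range (r + 1)).filter (fun i => Odd i) := by
        simp [Nat.not_even_iff_odd]
      rw [hfe]
      apply Finset.sum_congr rfl
      intro i hi
      obtain ⟨k, hk⟩ := (Finset.mem_filter.mp hi).2
      subst hk
      have h1 : (2 * k + 1 - 1) / 2 = k := by omega
      have h2 : x ^ (2 * k + 1) = x * β ^ k := by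
        rw [← hx, ← pow_mul, pow_succ]; ring
      rw [h1, h2]; ring
  rw [← key]
  have h2h : α + x = 2 * h := by rw [hxdef]; ring
  rw [h2h, mul_pow]
  have : ((2 : A) ^ r) = algebraMap ℚ A ((2 : ℚ) ^ r) := by
    rw [map_pow, map_ofNat]
  rw [this, ← Algebra.smul_def, smul_smul]
  norm_num
end

section
/- Define the intersection number N(m,n,p;g) = (−1)^{g−p} · (g!·m!/((g−p)!·q!)) · 2^{2g−2−p} · (2^q − 2) · B_q, where q = m+p+1−g, B_q is the q-th Bernoulli number (with B_0 = 1 and B_q = 0 for q < 0), and m + 2n + 3p = 3g−3. If g is an odd prime, then N(m,n,p;g) ≡ −1 (mod g) when p = 0 and m ∈ {g−1, 2g−2, 3g−3}, and N(m,n,p;g) ≡ 0 (mod g) otherwise. -/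
open Finset
set_option maxHeartbeats 1000000

namespace VSC


def T (q l : ℕ) : ℕ := ∑ k ∈ range l, k ^ q

lemma three_pow (v : ℕ) (hv : 1 ≤ v) : v + 2 ≤ 3 ^ v := by
  induction v with
  | zero => omega
  | succ n ih =>
    rcases Nat.eq_or_lt_of_le hv with h | h
    · simp [← h]
    · have h1 := ih (by omega)
      have : 3 ^ (n+1) = 3 * 3 ^ n := by ring
      omega

lemma val_le_sub_one (p : ℕ) [hp : Fact p.Prime] {k : ℕ} (hk : 1 ≤ k) :
    padicValNat p k + 1 ≤ k := by
  have h1 : p ^ padicValNat p k ∣ k := pow_padicValNat_dvd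
  have h2 : p ^ padicValNat p k ≤ k := Nat.le_of_dvd hk h1
  have h3 : 2 ^ padicValNat p k ≤ p ^ padicValNat p k :=
    Nat.pow_le_pow_left hp.out.two_le _
  have h4 := Nat.lt_two_pow_self (n := padicValNat p k)
  omega

lemma val_le_sub_two (p : ℕ) [hp : Fact p.Prime] (hp3 : 3 ≤ p) {k : ℕ} (hk : 2 ≤ k) :
    padicValNat p k + 2 ≤ k := by
  rcases Nat.eq_zero_or_pos (padicValNat p k) with h0 | h0
  · omega
  · have h1 : p ^ padicValNat p k ∣ k := pow_padicValNat_dvd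
    have h2 : p ^ padicValNat p k ≤ k := Nat.le_of_dvd (by omega) h1
    have h3 : 3 ^ padicValNat p k ≤ p ^ padicValNat p k := Nat.pow_le_pow_left hp3 _
    have h4 := three_pow (padicValNat p k) h0
    omega

lemma padicNorm_nat (p : ℕ) [Fact p.Prime] {n : ℕ} (hn : n ≠ 0) :
    padicNorm p n = (p : ℚ) ^ (-(padicValNat p n : ℤ)) := by
  rw [padicNorm.eq_zpow_of_nonzero (by exact_mod_cast hn)]
  congr 1
  rw [← padicValRat_of_nat]

theorem core (p : ℕ) [hp : Fact p.Prime] : ∀ q : ℕ,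
    padicNorm p ((p:ℚ) * bernoulli q) ≤ 1 ∧
    (Odd p → padicNorm p ((p:ℚ) * bernoulli q - (T q p : ℚ)) ≤ (p:ℚ)⁻¹) := by
  have hp1 : (1:ℚ) < (p:ℚ) := by exact_mod_cast hp.out.one_lt
  have hp0 : (0:ℚ) < (p:ℚ) := by positivity
  intro q
  induction q using Nat.strong_induction_on with
  | _ q IH =>
  rcases Nat.eq_zero_or_pos q with rfl | hq1
  · constructor
    · rw [bernoulli_zero, mul_one]
      rw [padicNorm.padicNorm_p_of_prime]
      rw [inv_le_one_iff₀]; right; linarith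
    · intro _
      have hT : (T 0 p : ℚ) = (p : ℚ) := by unfold T; simp
      rw [bernoulli_zero, mul_one, hT, sub_self, padicNorm.zero]
      positivity
  -- main case q ≥ 1
  have hT : (T q p : ℚ) = ∑ k ∈ range p, (k:ℚ)^q := by
    unfold T; push_cast; rfl
  have hmain : (p:ℚ) * bernoulli q - (T q p : ℚ) =
      -∑ i ∈ range q, bernoulli i * ((q + 1).choose i) * (p:ℚ) ^ (q + 1 - i) / (q + 1) := by
    rw [hT, sum_range_pow p q, sum_range_succ]
    have hlast : (bernoulli q * ((q+1).choose q) * (p:ℚ)^(q+1-q)/(q+1)) = (p:ℚ)*bernoulli q := by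
      rw [Nat.choose_succ_self_right]
      have h1 : q+1-q = 1 := by omega
      rw [h1]
      have hq1 : ((q:ℚ)+1) ≠ 0 := by positivity
      push_cast
      field_simp
    rw [hlast]; ring
  -- bound each term
  have hterm : ∀ e : ℤ,
      (∀ i ∈ range q, (1:ℤ) + padicValNat p (q+1-i) - (q+1-i) ≤ e) →
      padicNorm p ((p:ℚ) * bernoulli q - (T q p : ℚ)) ≤ (p:ℚ) ^ e := by
    intro e he
    rw [hmain, padicNorm.neg]
    apply padicNorm.sum_le' _ (by positivity)
    intro i hi
    have hiq : i < q := mem_range.mp hi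
    set k : ℕ := q + 1 - i with hk
    have hk2 : 2 ≤ k := by omega
    -- rewrite term
    have hcast : ((q.choose i : ℚ)) * ((q:ℚ)+1) = (((q+1).choose i : ℚ)) * ((k : ℕ) : ℚ) := by
      have := Nat.choose_mul_succ_eq q i
      exact_mod_cast congrArg (Nat.cast : ℕ → ℚ) this
    have hkne : ((k:ℕ):ℚ) ≠ 0 := by
      have : (0:ℕ) < k := by omega
      exact_mod_cast this.ne'
    have hq1ne : ((q:ℚ)+1) ≠ 0 := by positivity
    have hrw : bernoulli i * ((q + 1).choose i) * (p:ℚ) ^ (q + 1 - i) / (q + 1)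
        = bernoulli i * (q.choose i) * ((p:ℚ) ^ k / (k:ℚ)) := by
      rw [← hk]
      field_simp
      push_cast
      linear_combination (- bernoulli i) * hcast
    rw [hrw]
    -- norms
    have hBi : padicNorm p (bernoulli i) ≤ (p:ℚ) := by
      have h1 := (IH i hiq).1
      rw [padicNorm.mul, padicNorm.padicNorm_p_of_prime] at h1
      calc padicNorm p (bernoulli i) = (p:ℚ) * ((p:ℚ)⁻¹ * padicNorm p (bernoulli i)) := by
            field_simp
        _ ≤ (p:ℚ) * 1 := by
            apply mul_le_mul_of_nonneg_left h1 (le_of_lt hp0)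
        _ = (p:ℚ) := mul_one _
    have hC : padicNorm p ((q.choose i : ℚ)) ≤ 1 := padicNorm.of_nat _
    set v : ℕ := padicValNat p k with hv
    have hpk : padicNorm p ((p:ℚ) ^ k / (k:ℚ)) = (p:ℚ) ^ ((v:ℤ) - (k:ℤ)) := by
      rw [padicNorm.div]
      have h1 : ((p:ℚ))^k = (((p^k : ℕ)):ℚ) := by push_cast; ring
      rw [h1, padicNorm_nat p (pow_ne_zero k hp.out.ne_zero),
        padicNorm_nat p (show k ≠ 0 by omega), padicValNat.prime_pow, ← hv,
        ← zpow_sub₀ (ne_of_gt hp0)]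
      congr 1
      omega
    calc padicNorm p (bernoulli i * (q.choose i) * ((p:ℚ) ^ k / (k:ℚ)))
        = padicNorm p (bernoulli i) * padicNorm p ((q.choose i : ℚ)) *
            padicNorm p ((p:ℚ) ^ k / (k:ℚ)) := by rw [padicNorm.mul, padicNorm.mul]
      _ ≤ (p:ℚ) * 1 * (p:ℚ) ^ ((v:ℤ) - (k:ℤ)) := by
          have inner : padicNorm p (bernoulli i) * padicNorm p ((q.choose i : ℚ)) ≤ (p:ℚ) * 1 :=
            mul_le_mul hBi hC (padicNorm.nonneg _) (le_of_lt hp0)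
          exact mul_le_mul inner (le_of_eq hpk) (padicNorm.nonneg _) (by positivity)
      _ = (p:ℚ) ^ ((1:ℤ) + (v:ℤ) - (k:ℤ)) := by
          rw [mul_one, show ((1:ℤ) + (v:ℤ) - (k:ℤ)) = 1 + ((v:ℤ) - (k:ℤ)) by ring,
            zpow_add₀ (ne_of_gt hp0), zpow_one]
      _ ≤ (p:ℚ) ^ e := by
          apply zpow_le_zpow_right₀ (le_of_lt hp1)
          have h5 := he i hi
          rw [← hk] at h5
          omega
  constructor
  · -- part 1
    have h1 : padicNorm p ((p:ℚ) * bernoulli q - (T q p : ℚ)) ≤ (p:ℚ) ^ (0:ℤ) := by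
      apply hterm
      intro i hi
      have hiq : i < q := mem_range.mp hi
      have hk2 : 2 ≤ q + 1 - i := by omega
      have := val_le_sub_one p (show 1 ≤ q+1-i by omega)
      omega
    rw [zpow_zero] at h1
    have h2 : padicNorm p ((T q p : ℚ)) ≤ 1 := padicNorm.of_nat _
    calc padicNorm p ((p:ℚ) * bernoulli q)
        = padicNorm p (((p:ℚ) * bernoulli q - (T q p : ℚ)) + (T q p : ℚ)) := by ring_nf
      _ ≤ max (padicNorm p ((p:ℚ) * bernoulli q - (T q p : ℚ))) (padicNorm p ((T q p : ℚ))) :=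
          padicNorm.nonarchimedean
      _ ≤ 1 := max_le h1 h2
  · -- part 2
    intro hoddp
    have hp3 : 3 ≤ p := by
      have h2 := hp.out.two_le
      rcases Nat.eq_or_lt_of_le h2 with h | h
      · exfalso; rw [← h] at hoddp; simp [Nat.odd_iff] at hoddp
      · omega
    have h1 : padicNorm p ((p:ℚ) * bernoulli q - (T q p : ℚ)) ≤ (p:ℚ) ^ (-1:ℤ) := by
      apply hterm
      intro i hi
      have hiq : i < q := mem_range.mp hi
      have := val_le_sub_two p hp3 (show 2 ≤ q+1-i by omega)
      omega
    rwa [zpow_neg_one] at h1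

lemma exists_int_of_padicNorm (x : ℚ) (h : ∀ ℓ : ℕ, ℓ.Prime → padicNorm ℓ x ≤ 1) :
    ∃ z : ℤ, x = z := by
  refine ⟨x.num, ?_⟩
  suffices hden : x.den = 1 by
    conv_lhs => rw [← Rat.num_div_den x]
    rw [hden]; simp
  by_contra hd
  obtain ⟨ℓ, hℓ, hdvd⟩ := Nat.exists_prime_and_dvd hd
  haveI := Fact.mk hℓ
  have hx0 : x ≠ 0 := by
    rintro rfl; simp at hd
  have hnum : ¬ ℓ ∣ x.num.natAbs := by
    intro hc
    have := Nat.Coprime.eq_one_of_dvd (Nat.Coprime.coprime_dvd_left hc x.reduced) hdvd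
    exact hℓ.one_lt.ne' this
  have hv1 : padicValInt ℓ x.num = 0 := by
    unfold padicValInt
    exact padicValNat.eq_zero_of_not_dvd hnum
  have hv2 : 1 ≤ padicValNat ℓ x.den := by
    rcases Nat.eq_zero_or_pos (padicValNat ℓ x.den) with h0 | h0
    · exfalso
      have : ¬ ℓ ∣ x.den := by
        rw [padicValNat.eq_zero_iff] at h0
        rcases h0 with h | h | h
        · exact absurd h hℓ.ne_one
        · exact absurd h x.den_nz
        · exact h
      exact this hdvd
    · exact h0
  have hval : padicValRat ℓ x ≤ -1 := by
    unfold padicValRat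
    omega
  have := h ℓ hℓ
  rw [padicNorm.eq_zpow_of_nonzero hx0] at this
  have hlt : (1:ℚ) < (ℓ:ℚ) ^ (-padicValRat ℓ x) := by
    apply one_lt_zpow₀ (by exact_mod_cast hℓ.one_lt)
    omega
  linarith




/-- power sum -/


lemma sum_range_zmod (p : ℕ) [NeZero p] (f : ZMod p → ZMod p) :
    ∑ k ∈ range p, f (k : ZMod p) = ∑ x : ZMod p, f x := by
  refine Finset.sum_nbij' (fun k => ((k : ZMod p) : ZMod p)) (fun x => x.val) ?_ ?_ ?_ ?_ ?_
  · intro a _; exact mem_univ _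
  · intro x _; exact mem_range.mpr (ZMod.val_lt x)
  · intro a ha
    exact ZMod.val_cast_of_lt (mem_range.mp ha)
  · intro x _
    exact ZMod.natCast_rightInverse x
  · intro a _; rfl

lemma T_mod (p : ℕ) [Fact p.Prime] {q : ℕ} (hq : q ≠ 0) :
    ((T q p : ℕ) : ZMod p) = if (p - 1) ∣ q then -1 else 0 := by
  classical
  have h1 : ((T q p : ℕ) : ZMod p) = ∑ k ∈ range p, ((k : ZMod p)) ^ q := by
    unfold T; push_cast; rfl
  rw [h1, sum_range_zmod p (fun x => x ^ q)]
  have h3 : ∑ x : ZMod p, x ^ q = ∑ x : (ZMod p)ˣ, ((x : ZMod p)) ^ q := by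
    let φ : (ZMod p)ˣ ↪ ZMod p := ⟨fun x ↦ x, fun _ _ => Units.ext⟩
    have huniv : univ.map φ = univ \ {0} := by
      ext x
      simp only [mem_map, mem_univ, Function.Embedding.coeFn_mk, true_and, mem_sdiff,
        mem_singleton, φ]
      exact (isUnit_iff_ne_zero : IsUnit x ↔ x ≠ 0)
    calc
      ∑ x : ZMod p, x ^ q = ∑ x ∈ univ \ {(0 : ZMod p)}, x ^ q := by
        rw [← sum_sdiff ({0} : Finset (ZMod p)).subset_univ, sum_singleton, zero_pow hq, add_zero]
      _ = ∑ x : (ZMod p)ˣ, ((x : ZMod p)) ^ q := by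
        rw [← huniv, univ.sum_map φ]; rfl
  rw [h3]
  have := FiniteField.sum_pow_units (ZMod p) q
  rw [ZMod.card] at this
  exact this





-- placeholders for already-proven results


/-- bernoulli norm at most p -/
lemma bern_le (p : ℕ) [hp : Fact p.Prime] (q : ℕ) : padicNorm p (bernoulli q) ≤ (p:ℚ) := by
  have hp0 : (0:ℚ) < (p:ℚ) := by exact_mod_cast hp.out.pos
  have h1 := (core p q).1
  rw [padicNorm.mul, padicNorm.padicNorm_p_of_prime] at h1
  calc padicNorm p (bernoulli q) = (p:ℚ) * ((p:ℚ)⁻¹ * padicNorm p (bernoulli q)) := by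
        field_simp
    _ ≤ (p:ℚ) * 1 := mul_le_mul_of_nonneg_left h1 (le_of_lt hp0)
    _ = (p:ℚ) := mul_one _

lemma norm_nat_le_inv_of_dvd (p : ℕ) [hp : Fact p.Prime] {a : ℤ} (h : (p:ℤ) ∣ a) :
    padicNorm p (a : ℚ) ≤ (p:ℚ)⁻¹ := by
  have h2 : ((p ^ 1 : ℕ) : ℤ) ∣ a := by simpa using h
  have := (padicNorm.dvd_iff_norm_le (p := p) (n := 1) (z := a)).mp h2
  simpa using this

/-- p odd, (p-1) does not divide q : bernoulli q is p-integral -/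
lemma bern_int (p : ℕ) [hp : Fact p.Prime] (hodd : Odd p) {q : ℕ} (hq : q ≠ 0)
    (hnd : ¬ (p - 1) ∣ q) : padicNorm p (bernoulli q) ≤ 1 := by
  have hp0 : (0:ℚ) < (p:ℚ) := by exact_mod_cast hp.out.pos
  have h1 := (core p q).2 hodd
  have hTz : ((T q p : ℕ) : ZMod p) = 0 := by rw [T_mod p hq, if_neg hnd]
  have hTd : (p:ℤ) ∣ (T q p : ℤ) := by
    have := (ZMod.natCast_eq_zero_iff (T q p) p).mp hTz
    exact_mod_cast this
  have h2 : padicNorm p ((T q p : ℚ)) ≤ (p:ℚ)⁻¹ := by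
    have := norm_nat_le_inv_of_dvd p hTd
    simpa using this
  have h3 : padicNorm p ((p:ℚ) * bernoulli q) ≤ (p:ℚ)⁻¹ := by
    calc padicNorm p ((p:ℚ) * bernoulli q)
        = padicNorm p (((p:ℚ) * bernoulli q - (T q p : ℚ)) + (T q p : ℚ)) := by ring_nf
      _ ≤ max (padicNorm p ((p:ℚ) * bernoulli q - (T q p : ℚ)))
            (padicNorm p ((T q p : ℚ))) := padicNorm.nonarchimedean
      _ ≤ (p:ℚ)⁻¹ := max_le h1 h2
  rw [padicNorm.mul, padicNorm.padicNorm_p_of_prime] at h3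
  calc padicNorm p (bernoulli q) = (p:ℚ) * ((p:ℚ)⁻¹ * padicNorm p (bernoulli q)) := by
        field_simp
    _ ≤ (p:ℚ) * (p:ℚ)⁻¹ := mul_le_mul_of_nonneg_left h3 (le_of_lt hp0)
    _ = 1 := by field_simp

/-- p odd, (p-1) ∣ q, q ≠ 0 : p * B_q ≡ -1 mod p -/
lemma bern_cong (p : ℕ) [hp : Fact p.Prime] (hodd : Odd p) {q : ℕ} (hq : q ≠ 0)
    (hd : (p - 1) ∣ q) : padicNorm p ((p:ℚ) * bernoulli q + 1) ≤ (p:ℚ)⁻¹ := by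
  have h1 := (core p q).2 hodd
  have hTz : ((T q p : ℕ) : ZMod p) = -1 := by rw [T_mod p hq, if_pos hd]
  have hTd : (p:ℤ) ∣ ((T q p : ℤ) + 1) := by
    have : (((T q p : ℤ) + 1 : ℤ) : ZMod p) = 0 := by push_cast [hTz]; ring
    exact_mod_cast (ZMod.intCast_zmod_eq_zero_iff_dvd _ p).mp this
  have h2 : padicNorm p ((T q p : ℚ) + 1) ≤ (p:ℚ)⁻¹ := by
    have := norm_nat_le_inv_of_dvd p hTd
    push_cast at this
    convert this using 2
  calc padicNorm p ((p:ℚ) * bernoulli q + 1)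
      = padicNorm p (((p:ℚ) * bernoulli q - (T q p : ℚ)) + ((T q p : ℚ) + 1)) := by ring_nf
    _ ≤ max (padicNorm p ((p:ℚ) * bernoulli q - (T q p : ℚ)))
          (padicNorm p ((T q p : ℚ) + 1)) := padicNorm.nonarchimedean
    _ ≤ (p:ℚ)⁻¹ := max_le h1 h2

/-- factorial ratio divisibility -/
lemma fac_mul_dvd {q m t l : ℕ} (hlt : l ∣ t) (h1 : q < t) (h2 : t ≤ m) :
    q.factorial * l ∣ m.factorial := by
  have ha : q.factorial * l ∣ q.factorial * t := mul_dvd_mul_left _ hlt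
  have hb : q.factorial * t ∣ t.factorial := by
    have ht1 : t = (t - 1) + 1 := by omega
    have : t.factorial = (t-1).factorial * t := by
      conv_lhs => rw [ht1]
      rw [Nat.factorial_succ]
      rw [← ht1]; ring
    rw [this]
    exact mul_dvd_mul_right (Nat.factorial_dvd_factorial (by omega)) t
  exact dvd_trans (dvd_trans ha hb) (Nat.factorial_dvd_factorial h2)

lemma exists_multiple {l q : ℕ} (hl3 : 3 ≤ l) (hq2 : 2 ≤ q) (heven : 2 ∣ q)
    (hdvd : (l - 1) ∣ q) : ∃ t, l ∣ t ∧ q < t ∧ t ≤ q + q / 2 := by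
  obtain ⟨c, hc⟩ := hdvd
  refine ⟨l * (q / l) + l, ⟨q / l + 1, by ring⟩, ?_⟩
  have h1 : l * (q / l) + q % l = q := Nat.div_add_mod q l
  have h2 : q % l < l := Nat.mod_lt _ (by omega)
  rcases Nat.lt_or_ge (q / l) 2 with hD | hD
  · -- q / l ≤ 1
    interval_cases h : (q / l)
    · -- q < l
      rcases c with _ | _ | c
      · omega
      · omega
      · exfalso
        have h5 : (l-1) * 2 ≤ q := by
          rw [hc]; exact Nat.mul_le_mul_left _ (by omega)
        clear hc
        omega
    · -- q / l = 1 : l ≤ q < 2l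
      rcases c with _ | _ | _ | c
      · omega
      · omega
      · omega
      · exfalso
        have h5 : (l-1) * 3 ≤ q := by
          rw [hc]; exact Nat.mul_le_mul_left _ (by omega)
        clear hc
        omega
  · have hP : l * 2 ≤ l * (q / l) := Nat.mul_le_mul_left _ hD
    omega

lemma exists_multiple' {g q : ℕ} (hg : 1 ≤ g) (h : ¬ g ∣ q) :
    ∃ t, g ∣ t ∧ q < t ∧ t ≤ q + (g - 1) := by
  refine ⟨g * (q / g) + g, ⟨q / g + 1, by ring⟩, ?_⟩
  have h1 : g * (q / g) + q % g = g * (q / g) + q % g := rfl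
  have h2 := Nat.div_add_mod q g
  have h3 : q % g < g := Nat.mod_lt _ (by omega)
  have h4 : q % g ≠ 0 := fun hc => h (Nat.dvd_of_mod_eq_zero hc)
  omega

/-- factorial as product over Ioc -/
lemma fac_prod (a b : ℕ) (h : a ≤ b) : a.factorial * ∏ j ∈ Ioc a b, j = b.factorial := by
  induction b with
  | zero =>
    have : a = 0 := by omega
    subst this; simp
  | succ n ih =>
    rcases Nat.eq_or_lt_of_le h with h1 | h1
    · subst h1; simp
    · have h2 : a ≤ n := by omega
      rw [Finset.prod_Ioc_succ_top h2, ← mul_assoc, ih h2, Nat.factorial_succ]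
      ring

lemma prod_Ioc_mod (g t c : ℕ) [NeZero g] (h : (t : ZMod g) = 0) :
    ((∏ j ∈ Ioc t (t + c), j : ℕ) : ZMod g) = (c.factorial : ZMod g) := by
  induction c with
  | zero => simp
  | succ n ih =>
    have h2 : t ≤ t + n := by omega
    have : t + (n+1) = (t + n) + 1 := by omega
    rw [this, Finset.prod_Ioc_succ_top (show t ≤ t + n by omega), Nat.cast_mul, ih]
    have h3 : ((t + n + 1 : ℕ) : ZMod g) = (n:ZMod g) + 1 := by push_cast [h]; ring
    rw [h3, Nat.factorial_succ]
    push_cast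
    ring

end VSC


open VSC in
theorem stmt_11 (g m n p : ℕ) (hg : g.Prime) (hodd : Odd g)
    (hdim : m + 2 * n + 3 * p = 3 * g - 3) :
    ∃ z : ℤ,
      ((-1 : ℚ) ^ (g - p) *
        ((g.factorial * m.factorial : ℕ) : ℚ) /
          (((g - p).factorial * (((m + p + 1 : ℤ) - g).toNat).factorial : ℕ) : ℚ) *
        2 ^ (2 * g - 2 - p) * ((2 : ℚ) ^ ((m + p + 1 : ℤ) - g) - 2) *
        (if ((m + p + 1 : ℤ) - g) < 0 then 0 else bernoulli ((m + p + 1 : ℤ) - g).toNat))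
        = (z : ℚ) ∧
      ((z : ZMod g) =
        if p = 0 ∧ (m = g - 1 ∨ m = 2 * g - 2 ∨ m = 3 * g - 3) then -1 else 0) := by
  haveI : Fact g.Prime := ⟨hg⟩
  have hg3 : 3 ≤ g := by
    have h2 := hg.two_le
    rcases Nat.eq_or_lt_of_le h2 with h | h
    · exfalso; rw [← h] at hodd; simp [Nat.odd_iff] at hodd
    · omega
  have hoddn : g % 2 = 1 := Nat.odd_iff.mp hodd
  have hpg : p ≤ g - 1 := by omega
  rcases lt_or_ge ((m + p + 1 : ℤ) - g) 0 with hneg | hpos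
  · -- q negative : expression is zero
    rw [if_pos hneg]
    refine ⟨0, by push_cast; ring, ?_⟩
    have hcond : ¬ (p = 0 ∧ (m = g - 1 ∨ m = 2 * g - 2 ∨ m = 3 * g - 3)) := by
      rintro ⟨rfl, rfl | rfl | rfl⟩ <;> omega
    rw [if_neg hcond]
    push_cast; ring
  · -- q = m+p+1-g ≥ 0
    set q : ℕ := ((m + p + 1 : ℤ) - g).toNat with hqdef
    have hqQ : ((m + p + 1 : ℤ) - g) = (q : ℤ) := (Int.toNat_of_nonneg hpos).symm
    rw [if_neg (not_lt.mpr hpos), hqQ, zpow_natCast]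
    have hmq : m = q + (g - 1 - p) := by omega
    have hqeven : q % 2 = 0 := by omega
    have hq_le : q + 2 * p ≤ 2 * g - 2 := by omega
    have hqm : q ≤ m := by omega
    -- factor the factorial quotient into an integer
    obtain ⟨A1, hA1⟩ := Nat.factorial_dvd_factorial (show g - p ≤ g by omega)
    obtain ⟨A2, hA2⟩ := Nat.factorial_dvd_factorial hqm
    set a : ℕ := 2 * g - 2 - p with hadef
    set c : ℤ := (-1) ^ (g - p) * ((A1 * A2 : ℕ) : ℤ) * 2 ^ a * (2 ^ q - 2) with hcdef
    have hfacpos : (0:ℚ) < (((g - p).factorial * q.factorial : ℕ) : ℚ) := by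
      have := Nat.factorial_pos (g - p)
      have := Nat.factorial_pos q
      positivity
    have hEc : (-1 : ℚ) ^ (g - p) * ((g.factorial * m.factorial : ℕ) : ℚ) /
          (((g - p).factorial * q.factorial : ℕ) : ℚ) *
        2 ^ a * ((2 : ℚ) ^ q - 2) * bernoulli q = ((c : ℤ) : ℚ) * bernoulli q := by
      have hkey : ((g.factorial * m.factorial : ℕ) : ℚ) =
          (((g - p).factorial * q.factorial : ℕ) : ℚ) * ((A1 * A2 : ℕ) : ℚ) := by
        rw [← Nat.cast_mul]
        congr 1
        rw [hA1, hA2]; ring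
      rw [hkey, hcdef]
      push_cast
      field_simp
    rw [hEc]
    -- basic mod-g facts
    have hg2 : (2 : ZMod g) ≠ 0 := by
      have : ((2:ℕ) : ZMod g) ≠ 0 := by
        rw [Ne, ZMod.natCast_eq_zero_iff]
        intro hdvd
        have := Nat.le_of_dvd (by norm_num) hdvd
        omega
      simpa using this
    have hF : (2 : ZMod g) ^ (g - 1) = 1 := ZMod.pow_card_sub_one_eq_one hg2
    have hF2 : (2 : ZMod g) ^ (2 * g - 2) = 1 := by
      rw [show 2 * g - 2 = (g - 1) * 2 by omega, pow_mul, hF, one_pow]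
    have hgm1 : ((g - 1 : ℕ) : ZMod g) = -1 := by
      rw [Nat.cast_sub (by omega), ZMod.natCast_self]; simp
    have hgm2 : ((g - 2 : ℕ) : ZMod g) = -2 := by
      rw [Nat.cast_sub (by omega), ZMod.natCast_self]; simp
    have hinvlt : (g:ℚ)⁻¹ < 1 := by
      rw [inv_lt_one₀ (by positivity)]
      exact_mod_cast hg.one_lt
    -- divisibility tool for c
    have hcdvd : ∀ d : ℕ, (d:ℤ) ∣ ((A1 * A2 : ℕ) : ℤ) → (d:ℤ) ∣ c := by
      intro d hd
      rw [hcdef]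
      exact dvd_mul_of_dvd_left (dvd_mul_of_dvd_left (Dvd.dvd.mul_left hd _) _) _
    -- conclusions from norms
    have conclude0 : ∀ z : ℤ, padicNorm g ((z:ℚ)) < 1 → (z : ZMod g) = 0 := by
      intro z hz
      have h1 := (padicNorm.int_lt_one_iff (p := g) z).mp (by simpa using hz)
      exact (ZMod.intCast_zmod_eq_zero_iff_dvd z g).mpr h1
    have concludeNeg : ∀ z : ℤ, padicNorm g ((z:ℚ) + 1) < 1 → (z : ZMod g) = -1 := by
      intro z hz
      have h1 : padicNorm g (((z + 1 : ℤ) : ℚ)) < 1 := by push_cast; simpa using hz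
      have h2 := (padicNorm.int_lt_one_iff (p := g) (z+1)).mp (by simpa using h1)
      have h3 := (ZMod.intCast_zmod_eq_zero_iff_dvd (z+1) g).mpr h2
      push_cast at h3
      exact eq_neg_of_add_eq_zero_left h3
    by_cases hq0 : q = 0
    · -- q = 0 : bernoulli 0 = 1
      refine ⟨c, by rw [hq0, bernoulli_zero, mul_one], ?_⟩
      have hA2m : A2 = m.factorial := by
        have : m.factorial = 1 * A2 := by
          rw [hq0] at hA2; simpa [Nat.factorial_zero] using hA2
        omega
      rcases Nat.eq_zero_or_pos p with hp0 | hp1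
      · subst hp0
        have hA1one : A1 = 1 := by
          have : g.factorial * 1 = g.factorial * A1 := by
            simpa [Nat.sub_zero] using hA1
          have := Nat.eq_of_mul_eq_mul_left (Nat.factorial_pos g) this
          omega
        have hmval : m = g - 1 := by omega
        rw [if_pos ⟨rfl, Or.inl hmval⟩]
        rw [hcdef]
        push_cast
        rw [hq0, hA1one, hA2m, hmval]
        rw [ZMod.wilsons_lemma]
        have hsub : g - 0 = g := by omega
        rw [hsub]
        rw [Odd.neg_one_pow (by exact_mod_cast hodd)]
        have ha' : a = 2 * g - 2 := by omega
        rw [ha', hF2]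
        push_cast
        ring
      · -- p ≥ 1 : g ∣ A1
        have hgA1 : g ∣ A1 := by
          have h1 : g ∣ g.factorial := Nat.dvd_factorial (by omega) le_rfl
          have h2 : ¬ g ∣ (g - p).factorial := by
            intro hdd
            have := (Nat.Prime.dvd_factorial hg).mp hdd
            omega
          have h3 : g ∣ (g - p).factorial * A1 := hA1 ▸ h1
          exact (Nat.Coprime.dvd_of_dvd_mul_left
            ((Nat.Prime.coprime_iff_not_dvd hg).mpr h2) h3)
        rw [if_neg (by rintro ⟨rfl, -⟩; omega)]
        rw [hcdef]
        push_cast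
        have hz0 : ((A1 : ℕ) : ZMod g) = 0 := by
          rw [ZMod.natCast_eq_zero_iff]; exact hgA1
        rw [hz0]
        ring
    · -- q ≥ 2, even
      have hq2 : 2 ≤ q := by omega
      have hq_half : q / 2 ≤ g - 1 - p := by omega
      -- Step 1: integrality
      have hInt : ∀ ℓ : ℕ, ℓ.Prime → padicNorm ℓ (((c : ℤ) : ℚ) * bernoulli q) ≤ 1 := by
        intro ℓ hℓ
        haveI := Fact.mk hℓ
        rw [padicNorm.mul]
        rcases hℓ.eq_two_or_odd' with rfl | hℓodd
        · -- ℓ = 2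
          have h2c : (2:ℤ) ∣ c := by
            have h2 : (2:ℤ) ∣ (2 ^ q - 2) := by
              have hpow : (2:ℤ) ^ q = 2 ^ (q-1) * 2 := by
                rw [← pow_succ]
                congr 1
                omega
              exact ⟨2 ^ (q - 1) - 1, by rw [hpow]; ring⟩
            rw [hcdef]
            exact Dvd.dvd.mul_left h2 _
          have hn1 : padicNorm 2 ((c:ℤ):ℚ) ≤ (2:ℚ)⁻¹ := by
            have := norm_nat_le_inv_of_dvd 2 h2c
            simpa using this
          have hn2 : padicNorm 2 (bernoulli q) ≤ (2:ℚ) := by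
            have := bern_le 2 q
            simpa using this
          calc padicNorm 2 ((c:ℤ):ℚ) * padicNorm 2 (bernoulli q)
              ≤ (2:ℚ)⁻¹ * 2 := mul_le_mul hn1 hn2 (padicNorm.nonneg _) (by norm_num)
            _ = 1 := by norm_num
        · have hℓ3 : 3 ≤ ℓ := by
            have := hℓ.two_le
            rcases Nat.eq_or_lt_of_le this with h | h
            · exfalso; rw [← h] at hℓodd; simp [Nat.odd_iff] at hℓodd
            · omega
          by_cases hd : (ℓ - 1) ∣ q
          · -- ℓ ∣ A2
            obtain ⟨t, hlt, ht1, ht2⟩ := exists_multiple hℓ3 hq2 ⟨q/2, by omega⟩ hd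
            have hdvd : q.factorial * ℓ ∣ m.factorial :=
              fac_mul_dvd hlt ht1 (by omega)
            have hlA2 : ℓ ∣ A2 := by
              rw [hA2] at hdvd
              exact (Nat.mul_dvd_mul_iff_left (Nat.factorial_pos q)).mp hdvd
            have hlc : (ℓ:ℤ) ∣ c := hcdvd ℓ (by exact_mod_cast (hlA2.mul_left A1))
            have hn1 := norm_nat_le_inv_of_dvd ℓ hlc
            have hn2 := bern_le ℓ q
            calc padicNorm ℓ ((c:ℤ):ℚ) * padicNorm ℓ (bernoulli q)
                ≤ (ℓ:ℚ)⁻¹ * ℓ := mul_le_mul hn1 hn2 (padicNorm.nonneg _)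
                  (by positivity)
              _ = 1 := by
                  field_simp
          · have hn1 : padicNorm ℓ ((c:ℤ):ℚ) ≤ 1 := padicNorm.of_int _
            have hn2 := bern_int ℓ hℓodd hq0 hd
            calc padicNorm ℓ ((c:ℤ):ℚ) * padicNorm ℓ (bernoulli q)
                ≤ 1 * 1 := mul_le_mul hn1 hn2 (padicNorm.nonneg _) (by norm_num)
              _ = 1 := by norm_num
      obtain ⟨z, hz⟩ := exists_int_of_padicNorm _ hInt
      refine ⟨z, hz, ?_⟩
      -- Step 2: congruence mod g
      -- A2 as a product
      have hA2prod : A2 = ∏ j ∈ Ioc q m, j := by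
        have h1 := fac_prod q m hqm
        rw [hA2] at h1
        exact (Nat.eq_of_mul_eq_mul_left (Nat.factorial_pos q) h1).symm
      -- helper for the special cases
      have finish_special : ∀ A2' : ℕ, A1 = 1 → Odd (g - p) → (g - 1) ∣ q →
          A2 = g * A2' →
          ((A2' : ZMod g) * (2 : ZMod g) ^ a * ((2 : ZMod g) ^ q - 2) = -1) →
          (z : ZMod g) = -1 := by
        intro A2' hA1one hgp hg1q hA2g hres
        apply concludeNeg
        set K : ℤ := (A2' : ℤ) * 2 ^ a * (2 ^ q - 2) with hKdef
        have hcK : ((c : ℤ) : ℚ) = -(K : ℚ) * (g : ℚ) := by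
          rw [hcdef, hKdef, hA1one, hA2g]
          push_cast
          rw [Odd.neg_one_pow (by exact_mod_cast hgp)]
          ring
        have hKres : ((K : ℤ) : ZMod g) = -1 := by
          rw [hKdef]
          push_cast
          exact hres
        have hKd : (g:ℤ) ∣ (K + 1) := by
          have : ((K + 1 : ℤ) : ZMod g) = 0 := by push_cast [hKres]; ring
          exact (ZMod.intCast_zmod_eq_zero_iff_dvd _ g).mp this
        have hEE : (z:ℚ) + 1 =
            (-(K:ℚ)) * ((g:ℚ) * bernoulli q + 1) + ((K:ℚ) + 1) := by
          rw [← hz, hcK]; ring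
        rw [hEE]
        have hn1 : padicNorm g ((-(K:ℚ)) * ((g:ℚ) * bernoulli q + 1)) ≤ (g:ℚ)⁻¹ := by
          rw [padicNorm.mul, padicNorm.neg]
          have h1 : padicNorm g ((K:ℚ)) ≤ 1 := padicNorm.of_int _
          have h2 := bern_cong g hodd hq0 hg1q
          calc padicNorm g ((K:ℚ)) * padicNorm g ((g:ℚ) * bernoulli q + 1)
              ≤ 1 * (g:ℚ)⁻¹ := mul_le_mul h1 h2 (padicNorm.nonneg _) (by norm_num)
            _ = (g:ℚ)⁻¹ := one_mul _
        have hn2 : padicNorm g ((K:ℚ) + 1) ≤ (g:ℚ)⁻¹ := by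
          have := norm_nat_le_inv_of_dvd g hKd
          push_cast at this
          simpa using this
        calc padicNorm g ((-(K:ℚ)) * ((g:ℚ) * bernoulli q + 1) + ((K:ℚ) + 1))
            ≤ max (padicNorm g ((-(K:ℚ)) * ((g:ℚ) * bernoulli q + 1)))
                (padicNorm g ((K:ℚ) + 1)) := padicNorm.nonarchimedean
          _ ≤ (g:ℚ)⁻¹ := max_le hn1 hn2
          _ < 1 := hinvlt
      by_cases hs3 : q = 2 * g - 2
      · -- S3 : p = 0, m = 3g-3
        have hp0 : p = 0 := by omega
        subst hp0
        have hA1one : A1 = 1 := by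
          have : g.factorial * 1 = g.factorial * A1 := by
            simpa [Nat.sub_zero] using hA1
          have := Nat.eq_of_mul_eq_mul_left (Nat.factorial_pos g) this
          omega
        have hm3 : m = 3 * g - 3 := by omega
        -- A2 = (2g-1) * 2g * D
        set D : ℕ := ∏ j ∈ Ioc (2*g) (3*g-3), j with hDdef
        have hset1 : Ioc (2*g-2) (2*g-1) = {2*g-1} := by
          ext x; simp only [Finset.mem_Ioc, Finset.mem_singleton]; omega
        have hset2 : Ioc (2*g-1) (2*g) = {2*g} := by
          ext x; simp only [Finset.mem_Ioc, Finset.mem_singleton]; omega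
        have hsplit : A2 = ((2*g-1) * (2*g)) * D := by
          rw [hA2prod, hs3, hm3]
          rw [← Finset.prod_Ioc_consecutive _ (show 2*g-2 ≤ 2*g by omega)
            (show 2*g ≤ 3*g-3 by omega)]
          rw [← Finset.prod_Ioc_consecutive _ (show 2*g-2 ≤ 2*g-1 by omega)
            (show 2*g-1 ≤ 2*g by omega)]
          rw [hset1, hset2, prod_singleton, prod_singleton]
        have hA2g : A2 = g * ((2*g-1) * 2 * D) := by
          rw [hsplit]
          have h2g : 2*g = g*2 := by ring
          rw [h2g]
          ring
        have hDmod : ((D : ℕ) : ZMod g) = ((g-3).factorial : ZMod g) := by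
          rw [hDdef, show 3*g-3 = 2*g + (g-3) by omega]
          exact prod_Ioc_mod g (2*g) (g-3) (by push_cast [ZMod.natCast_self]; ring)
        have h2gm1 : ((2*g-1 : ℕ) : ZMod g) = -1 := by
          rw [Nat.cast_sub (by omega)]
          push_cast [ZMod.natCast_self]
          ring
        -- Wilson : 2 * (g-3)! = -1
        have hw : (2 : ZMod g) * ((g-3).factorial : ZMod g) = -1 := by
          have w := ZMod.wilsons_lemma g
          have e2 : (g-1).factorial = (g-1) * ((g-2) * (g-3).factorial) := by
            rw [show g-1 = (g-2)+1 by omega, Nat.factorial_succ,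
              show g-2 = (g-3)+1 by omega, Nat.factorial_succ]
          rw [e2] at w
          push_cast at w
          rw [hgm1, hgm2] at w
          linear_combination w
        apply Eq.trans ?_ (if_pos ⟨rfl, Or.inr (Or.inr hm3)⟩).symm
        apply finish_special ((2*g-1) * 2 * D) hA1one (by simpa using hodd)
          (by rw [hs3]; exact ⟨2, by omega⟩) hA2g
        push_cast
        rw [h2gm1, hDmod]
        have ha' : a = 2*g-2 := by omega
        rw [ha', hF2, hs3, hF2]
        linear_combination hw
      · by_cases hs2 : q = g - 1 ∧ p = 0
        · -- S2 : m = 2g-2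
          obtain ⟨hqg, hp0⟩ := hs2
          subst hp0
          have hA1one : A1 = 1 := by
            have : g.factorial * 1 = g.factorial * A1 := by
              simpa [Nat.sub_zero] using hA1
            have := Nat.eq_of_mul_eq_mul_left (Nat.factorial_pos g) this
            omega
          have hm2 : m = 2 * g - 2 := by omega
          set D : ℕ := ∏ j ∈ Ioc g (2*g-2), j with hDdef
          have hset1 : Ioc (g-1) g = {g} := by
            ext x; simp only [Finset.mem_Ioc, Finset.mem_singleton]; omega
          have hA2g : A2 = g * D := by
            rw [hA2prod, hqg, hm2]
            rw [← Finset.prod_Ioc_consecutive _ (show g-1 ≤ g by omega)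
              (show g ≤ 2*g-2 by omega)]
            rw [hset1, prod_singleton]
          have hDmod : ((D : ℕ) : ZMod g) = ((g-2).factorial : ZMod g) := by
            rw [hDdef, show 2*g-2 = g + (g-2) by omega]
            exact prod_Ioc_mod g g (g-2) (ZMod.natCast_self g)
          have hw : ((g-2).factorial : ZMod g) = 1 := by
            have w := ZMod.wilsons_lemma g
            have e2 : (g-1).factorial = (g-1) * (g-2).factorial := by
              rw [show g-1 = (g-2)+1 by omega, Nat.factorial_succ]
            rw [e2] at w
            push_cast at w
            rw [hgm1] at w
            linear_combination -w
          apply Eq.trans ?_ (if_pos ⟨rfl, Or.inr (Or.inl hm2)⟩).symm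
          apply finish_special D hA1one (by simpa using hodd)
            (by rw [hqg]) hA2g
          push_cast
          rw [hDmod, hw]
          have ha' : a = 2*g-2 := by omega
          rw [ha', hF2, hqg, hF]
          ring
        · -- non-special : answer ≡ 0
          have hcond : ¬ (p = 0 ∧ (m = g - 1 ∨ m = 2 * g - 2 ∨ m = 3 * g - 3)) := by
            rintro ⟨rfl, rfl | rfl | rfl⟩
            · omega
            · exact hs2 ⟨by omega, rfl⟩
            · exact hs3 (by omega)
          rw [if_neg hcond]
          apply conclude0
          rw [← hz, padicNorm.mul]
          by_cases hgd : (g - 1) ∣ q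
          · -- q = g-1 and p ≥ 1 : g^2 ∣ A1*A2
            have hqg : q = g - 1 := by
              obtain ⟨k, hk⟩ := hgd
              rcases k with _ | _ | _ | k
              · omega
              · omega
              · exfalso; apply hs3; omega
              · exfalso
                have h5 : (g-1) * 3 ≤ q := by
                  rw [hk]; exact Nat.mul_le_mul_left _ (by omega)
                omega
            have hp1 : 1 ≤ p := by
              rcases Nat.eq_zero_or_pos p with h | h
              · exact absurd ⟨hqg, h⟩ hs2
              · exact h
            have hgA1 : g ∣ A1 := by
              have h1 : g ∣ g.factorial := Nat.dvd_factorial (by omega) le_rfl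
              have h2 : ¬ g ∣ (g - p).factorial := by
                intro hdd
                have := (Nat.Prime.dvd_factorial hg).mp hdd
                omega
              exact Nat.Coprime.dvd_of_dvd_mul_left
                ((Nat.Prime.coprime_iff_not_dvd hg).mpr h2) (hA1 ▸ h1)
            have hgA2 : g ∣ A2 := by
              have hdvd : q.factorial * g ∣ m.factorial :=
                fac_mul_dvd (dvd_refl g) (by omega) (by omega)
              rw [hA2] at hdvd
              exact (Nat.mul_dvd_mul_iff_left (Nat.factorial_pos q)).mp hdvd
            have hg2c : ((g^2 : ℕ):ℤ) ∣ c := by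
              apply hcdvd
              have h6 : (g^2 : ℕ) ∣ A1 * A2 := by
                rw [pow_two]; exact mul_dvd_mul hgA1 hgA2
              exact_mod_cast h6
            have hn1 : padicNorm g ((c:ℤ):ℚ) ≤ (g:ℚ) ^ (-2 : ℤ) := by
              have := (padicNorm.dvd_iff_norm_le (p := g) (n := 2) (z := c)).mp
                (by exact_mod_cast hg2c)
              simpa using this
            have hn2 := bern_le g q
            calc padicNorm g ((c:ℤ):ℚ) * padicNorm g (bernoulli q)
                ≤ (g:ℚ) ^ (-2:ℤ) * (g:ℚ) := mul_le_mul hn1 hn2 (padicNorm.nonneg _)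
                  (by positivity)
              _ = (g:ℚ)⁻¹ := by
                  rw [show (-2:ℤ) = -1 + -1 by norm_num, zpow_add₀ (by positivity : (g:ℚ) ≠ 0)]
                  field_simp
              _ < 1 := hinvlt
          · -- g ∣ A1*A2 and bernoulli is g-integral
            have hgA : g ∣ A1 * A2 := by
              rcases Nat.eq_zero_or_pos p with hp0 | hp1
              · -- g ∣ A2
                have hgq : ¬ g ∣ q := by
                  intro ⟨k, hk⟩
                  rcases k with _ | _ | k
                  · omega
                  · omega
                  · have h5 : g * 2 ≤ q := by
                      rw [hk]; exact Nat.mul_le_mul_left _ (by omega)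
                    omega
                obtain ⟨t, hlt, ht1, ht2⟩ := exists_multiple' (by omega) hgq
                have hdvd : q.factorial * g ∣ m.factorial :=
                  fac_mul_dvd hlt ht1 (by omega)
                rw [hA2] at hdvd
                exact Dvd.dvd.mul_left
                  ((Nat.mul_dvd_mul_iff_left (Nat.factorial_pos q)).mp hdvd) A1
              · have h1 : g ∣ g.factorial := Nat.dvd_factorial (by omega) le_rfl
                have h2 : ¬ g ∣ (g - p).factorial := by
                  intro hdd
                  have := (Nat.Prime.dvd_factorial hg).mp hdd
                  omega
                exact Dvd.dvd.mul_right (Nat.Coprime.dvd_of_dvd_mul_left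
                  ((Nat.Prime.coprime_iff_not_dvd hg).mpr h2) (hA1 ▸ h1)) A2
            have hgc : (g:ℤ) ∣ c := hcdvd g (by exact_mod_cast hgA)
            have hn1 := norm_nat_le_inv_of_dvd g hgc
            have hn2 := bern_int g hodd hq0 hgd
            calc padicNorm g ((c:ℤ):ℚ) * padicNorm g (bernoulli q)
                ≤ (g:ℚ)⁻¹ * 1 := mul_le_mul hn1 hn2 (padicNorm.nonneg _) (by positivity)
              _ = (g:ℚ)⁻¹ := mul_one _
              _ < 1 := hinvlt
end

section
/- Let m ≥ 1 and let p be an odd prime with p > 2m+1. The (m+1)×(m+1) Hankel-type determinant det( e_{m+j−i} )_{0 ≤ i,j ≤ m}, where e_n = C((p−1)/2, n) (with e_n = 0 for n < 0 or n > (p−1)/2), is not congruent to 0 modulo p. -/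
open Finset Matrix

/-- Key `ℕ` identity: LDLᵀ decomposition of the central binomial Hankel matrix. -/
lemma hankel_sum (m i j : ℕ) (hi : i ≤ m) (hj : j ≤ m) :
    (2 * (i + j)).choose (i + j) =
      ∑ r ∈ Finset.range (m + 1),
        (if r = 0 then 1 else 2) * ((2 * i).choose (i + r) * (2 * j).choose (j + r)) := by
  set g : ℕ → ℕ := fun r => (2 * i).choose (i + r) * (2 * j).choose (j + r) with hg
  have h1 : (2 * (i + j)).choose (i + j)
      = ∑ a ∈ Finset.range (i + (j + 1)),
          (2 * i).choose a * (2 * j).choose (i + j - a) := by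
    rw [Nat.mul_add, Nat.add_choose_eq, Finset.Nat.sum_antidiagonal_eq_sum_range_succ_mk]
    rfl
  have hA : (∑ a ∈ Finset.range i, (2 * i).choose a * (2 * j).choose (i + j - a))
      = ∑ r ∈ Finset.range m, g (r + 1) := by
    rw [← Finset.sum_range_reflect]
    have step : ∀ r ∈ Finset.range i,
        (2 * i).choose (i - 1 - r) * (2 * j).choose (i + j - (i - 1 - r))
          = g (r + 1) := by
      intro r hr
      rw [Finset.mem_range] at hr
      have e1 : i + j - (i - 1 - r) = j + (r + 1) := by omega
      have e2 : (2 * i).choose (i - 1 - r) = (2 * i).choose (i + (r + 1)) := by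
        have h := Nat.choose_symm (n := 2 * i) (k := i + (r + 1)) (by omega)
        rw [show 2 * i - (i + (r + 1)) = i - 1 - r from by omega] at h
        exact h
      rw [e1, e2, hg]
    rw [Finset.sum_congr rfl step]
    apply Finset.sum_subset (Finset.range_subset_range.mpr hi)
    intro r _ hr
    rw [Finset.mem_range, not_lt] at hr
    show (2 * i).choose (i + (r + 1)) * (2 * j).choose (j + (r + 1)) = 0
    rw [Nat.choose_eq_zero_of_lt (n := 2 * i) (k := i + (r + 1)) (by omega), zero_mul]
  have hB : (∑ r ∈ Finset.range (j + 1), (2 * i).choose (i + r) * (2 * j).choose (i + j - (i + r)))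
      = ∑ r ∈ Finset.range (m + 1), g r := by
    have step : ∀ r ∈ Finset.range (j + 1),
        (2 * i).choose (i + r) * (2 * j).choose (i + j - (i + r))
          = g r := by
      intro r hr
      rw [Finset.mem_range] at hr
      have e1 : i + j - (i + r) = j - r := by omega
      have e2 : (2 * j).choose (j - r) = (2 * j).choose (j + r) := by
        have h := Nat.choose_symm (n := 2 * j) (k := j + r) (by omega)
        rw [show 2 * j - (j + r) = j - r from by omega] at h
        exact h
      rw [e1, e2, hg]
    rw [Finset.sum_congr rfl step]
    apply Finset.sum_subset (Finset.range_subset_range.mpr (by omega))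
    intro r _ hr
    rw [Finset.mem_range, not_lt] at hr
    show (2 * i).choose (i + r) * (2 * j).choose (j + r) = 0
    rw [Nat.choose_eq_zero_of_lt (n := 2 * j) (k := j + r) (by omega), mul_zero]
  have key : (2 * (i + j)).choose (i + j)
      = (∑ r ∈ Finset.range m, g (r + 1)) + ∑ r ∈ Finset.range (m + 1), g r := by
    rw [h1, Finset.sum_range_add, hA, hB]
  rw [key, Finset.sum_range_succ' (fun r => (if r = 0 then 1 else 2) * g r) m,
    Finset.sum_range_succ' g m]
  have h2g : ∑ r ∈ Finset.range m, (if r + 1 = 0 then 1 else 2) * g (r + 1)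
      = ∑ r ∈ Finset.range m, (g (r + 1) + g (r + 1)) := by
    refine Finset.sum_congr rfl fun r _ => ?_
    rw [if_neg (Nat.succ_ne_zero r)]
    ring
  rw [h2g, Finset.sum_add_distrib, if_pos rfl, one_mul]
  omega

lemma cb_congr (p m : ℕ) (hp : p.Prime) (hodd : Odd p) (hpm : 2 * m + 1 < p) :
    ∀ n, n ≤ 2 * m →
      ((Nat.centralBinom n : ZMod p)) = (-4) ^ n * (((p - 1) / 2).choose n : ZMod p) := by
  haveI : Fact p.Prime := ⟨hp⟩
  have hpe : 2 * ((p - 1) / 2) = p - 1 := by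
    obtain ⟨t, ht⟩ := hodd; omega
  have h2k : 2 * (((p - 1) / 2 : ℕ) : ZMod p) = -1 := by
    have h1 : (((p - 1 : ℕ)) : ZMod p) = -1 := by
      have hcast : ((p - 1 + 1 : ℕ) : ZMod p) = ((p : ℕ) : ZMod p) := by congr 1; omega
      rw [Nat.cast_add, Nat.cast_one, ZMod.natCast_self] at hcast
      exact eq_neg_of_add_eq_zero_left hcast
    calc 2 * (((p - 1) / 2 : ℕ) : ZMod p) = ((2 * ((p - 1) / 2) : ℕ) : ZMod p) := by push_cast; ring
      _ = ((p - 1 : ℕ) : ZMod p) := by rw [hpe]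
      _ = -1 := h1
  intro n
  induction n with
  | zero => simp
  | succ n ih =>
    intro hn
    have ihn := ih (by omega)
    have hne : ((n + 1 : ℕ) : ZMod p) ≠ 0 := by
      rw [Ne, ZMod.natCast_eq_zero_iff]
      intro h
      have := Nat.le_of_dvd (by omega) h
      omega
    have hcb := congrArg (Nat.cast : ℕ → ZMod p) (Nat.succ_mul_centralBinom_succ n)
    push_cast at hcb
    refine mul_left_cancel₀ hne ?_
    push_cast
    by_cases hnk : n ≤ (p - 1) / 2
    · have hch := congrArg (Nat.cast : ℕ → ZMod p) (Nat.choose_succ_right_eq ((p - 1) / 2) n)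
      push_cast [Nat.cast_sub hnk] at hch
      linear_combination hcb + (2 * (2 * (n : ZMod p) + 1)) * ihn
        - (-4 : ZMod p) ^ (n + 1) * hch
        + 2 * (-4 : ZMod p) ^ n * ((((p - 1) / 2).choose n : ℕ) : ZMod p) * h2k
    · have h0 : ((p - 1) / 2).choose (n + 1) = 0 := Nat.choose_eq_zero_of_lt (by omega)
      have h0' : ((p - 1) / 2).choose n = 0 := Nat.choose_eq_zero_of_lt (by omega)
      rw [h0', Nat.cast_zero, mul_zero] at ihn
      rw [h0, Nat.cast_zero]
      linear_combination hcb + (2 * (2 * (n : ZMod p) + 1)) * ihn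

theorem stmt_12 (m p : ℕ) (hm : 1 ≤ m) (hp : p.Prime) (hodd : Odd p)
    (hpm : 2 * m + 1 < p) :
    Matrix.det (Matrix.of fun i j : Fin (m + 1) =>
      ((((p - 1) / 2).choose (m + (j : ℕ) - (i : ℕ)) : ZMod p))) ≠ 0 := by
  haveI : Fact p.Prime := ⟨hp⟩
  have h2 : (2 : ZMod p) ≠ 0 := by
    have : ((2 : ℕ) : ZMod p) ≠ 0 := by
      rw [Ne, ZMod.natCast_eq_zero_iff]
      intro h
      have := Nat.le_of_dvd (by omega) h
      omega
    simpa using this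
  have h4 : (-4 : ZMod p) ≠ 0 := by
    rw [neg_ne_zero, show (4 : ZMod p) = 2 * 2 by norm_num]
    exact mul_ne_zero h2 h2
  set u : ZMod p := -4 with hu
  set M : Matrix (Fin (m + 1)) (Fin (m + 1)) (ZMod p) :=
    Matrix.of fun i j : Fin (m + 1) =>
      ((((p - 1) / 2).choose (m + (j : ℕ) - (i : ℕ)) : ZMod p)) with hM
  -- the central binomial Toeplitz matrix
  set B : Matrix (Fin (m + 1)) (Fin (m + 1)) (ZMod p) :=
    Matrix.of fun i j : Fin (m + 1) =>
      ((Nat.centralBinom (m + (j : ℕ) - (i : ℕ)) : ZMod p)) with hB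
  set H : Matrix (Fin (m + 1)) (Fin (m + 1)) (ZMod p) :=
    Matrix.of fun i j : Fin (m + 1) =>
      ((Nat.centralBinom ((i : ℕ) + (j : ℕ)) : ZMod p)) with hH
  -- Step 1: det B = c * det M with c ≠ 0
  have key : ∀ i j : Fin (m + 1),
      B i j = u ^ (m - (i : ℕ)) * (u ^ (j : ℕ) * M i j) := by
    intro i j
    have hi := i.isLt
    have hj := j.isLt
    have h := cb_congr p m hp hodd hpm (m + (j : ℕ) - (i : ℕ)) (by omega)
    simp only [hB, hM, Matrix.of_apply]
    rw [h, ← hu, show m + (j : ℕ) - (i : ℕ) = (m - (i : ℕ)) + (j : ℕ) from by omega, pow_add,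
      mul_assoc]
  have hdetB : B.det = (∏ i : Fin (m + 1), u ^ (m - (i : ℕ)))
      * ((∏ j : Fin (m + 1), u ^ (j : ℕ)) * M.det) := by
    have : B = Matrix.of fun i j : Fin (m + 1) => u ^ (m - (i : ℕ)) *
        (Matrix.of fun i j : Fin (m + 1) => u ^ (j : ℕ) * M i j) i j := by
      ext i j
      simpa using key i j
    rw [this, Matrix.det_mul_column, Matrix.det_mul_row]
  -- Step 2: B is a row permutation of H
  have hBH : B = H.submatrix (Fin.revPerm) id := by
    ext i j
    have hi := i.isLt
    simp only [hB, hH, Matrix.submatrix_apply, Matrix.of_apply, id_eq, Fin.revPerm_apply]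
    congr 2
    rw [Fin.val_rev]
    omega
  -- Step 3: H = L D Lᵀ
  set L : Matrix (Fin (m + 1)) (Fin (m + 1)) (ZMod p) :=
    Matrix.of fun i r : Fin (m + 1) =>
      (((2 * (i : ℕ)).choose ((i : ℕ) + (r : ℕ)) : ZMod p)) with hL
  set d : Fin (m + 1) → ZMod p := fun r => if (r : ℕ) = 0 then 1 else 2 with hd
  have hHLDL : H = L * Matrix.diagonal d * Lᵀ := by
    ext i j
    have hi : (i : ℕ) ≤ m := by omega
    have hj : (j : ℕ) ≤ m := by omega
    have hs := hankel_sum m i j hi hj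
    have hc : ((Nat.centralBinom ((i : ℕ) + (j : ℕ)) : ℕ) : ZMod p)
        = ∑ r ∈ Finset.range (m + 1), (if r = 0 then 1 else 2 : ZMod p) *
            (((2 * (i : ℕ)).choose ((i : ℕ) + r) : ZMod p)
              * ((2 * (j : ℕ)).choose ((j : ℕ) + r) : ZMod p)) := by
      unfold Nat.centralBinom
      rw [hs]
      push_cast [apply_ite (Nat.cast : ℕ → ZMod p)]
      ring
    have hent : (L * Matrix.diagonal d * Lᵀ) i j = ∑ r : Fin (m + 1), L i r * d r * L j r := by
      rw [Matrix.mul_apply]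
      refine Finset.sum_congr rfl fun r _ => ?_
      rw [Matrix.mul_diagonal, Matrix.transpose_apply]
    show H i j = _
    rw [hent]
    simp only [hH, Matrix.of_apply]
    rw [hc, ← Fin.sum_univ_eq_sum_range (fun r => (if r = 0 then 1 else 2 : ZMod p) *
      (((2 * (i : ℕ)).choose ((i : ℕ) + r) : ZMod p)
        * ((2 * (j : ℕ)).choose ((j : ℕ) + r) : ZMod p))) (m + 1)]
    apply Finset.sum_congr rfl
    intro r _
    simp only [hL, hd, Matrix.of_apply]
    ring
  have hLdet : L.det = 1 := by
    have htri : L.BlockTriangular OrderDual.toDual := by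
      intro i j hij
      simp only [OrderDual.toDual_lt_toDual, Fin.lt_def] at hij
      simp only [hL, Matrix.of_apply]
      rw [Nat.choose_eq_zero_of_lt (n := 2 * (i : ℕ)) (k := (i : ℕ) + (j : ℕ)) (by omega),
        Nat.cast_zero]
    rw [Matrix.det_of_lowerTriangular L htri]
    apply Finset.prod_eq_one
    intro i _
    simp only [hL, Matrix.of_apply]
    rw [show (i : ℕ) + (i : ℕ) = 2 * (i : ℕ) from by ring, Nat.choose_self, Nat.cast_one]
  have hDdet : (Matrix.diagonal d).det ≠ 0 := by
    rw [Matrix.det_diagonal]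
    apply Finset.prod_ne_zero_iff.mpr
    intro r _
    simp only [hd]
    split
    · exact one_ne_zero
    · exact h2
  have hHdet : H.det ≠ 0 := by
    rw [hHLDL, Matrix.det_mul, Matrix.det_mul, Matrix.det_transpose, hLdet]
    simpa using hDdet
  have hBdet : B.det ≠ 0 := by
    rw [hBH, Matrix.det_permute]
    apply mul_ne_zero _ hHdet
    rcases Int.units_eq_one_or (Equiv.Perm.sign (Fin.revPerm : Equiv.Perm (Fin (m + 1)))) with h | h
    · rw [h]; simp
    · rw [h]; simp [h2]  -- -1 ≠ 0
  intro hMdet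
  rw [hMdet, mul_zero, mul_zero] at hdetB
  exact hBdet hdetB
end
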